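/- The second factorial moment of the geometric distribution of order k is μ_(2) = 2/(q^2 p^{2k}) - 2(1 + (k+1)q)/(q^2 p^k) + 2/q. -/

import Mathlib

open Finset

attribute [local instance] Classical.propDecidable

/-- `hasRunEnd k n ω m` : in the outcome string `ω` of `n` Bernoulli trials, a run of
`k` consecutive successes ends at trial `m` (trials `m-k+1, ..., m` are successes). -/
def hasRunEnd (k n : ℕ) (ω : Fin n → Bool) (m : ℕ) : Prop :=
  k ≤ m ∧ m ≤ n ∧ ∀ j : Fin n, m - k ≤ (j : ℕ) → (j : ℕ) < m → ω j = true

/-- The first run of `k` consecutive successes is completed exactly at trial `n`. -/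
def firstRun (k n : ℕ) (ω : Fin n → Bool) : Prop :=
  hasRunEnd k n ω n ∧ ∀ m < n, ¬ hasRunEnd k n ω m

/-- The pmf of the geometric distribution of order `k`:
`fk k p n = P(N_k = n)` where `N_k` is the waiting time for the first run of `k`
consecutive successes in i.i.d. Bernoulli(`p`) trials; each outcome string contributes
`p^{#successes} (1-p)^{#failures}`. -/
noncomputable def fk (k : ℕ) (p : ℝ) (n : ℕ) : ℝ :=
  ∑ ω ∈ Finset.univ.filter (fun ω : Fin n → Bool => firstRun k n ω),
    p ^ (Finset.univ.filter (fun i => ω i = true)).card *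
      (1 - p) ^ (Finset.univ.filter (fun i => ω i = false)).card

/-! ### weight -/

noncomputable def wt (p : ℝ) {n : ℕ} (ω : Fin n → Bool) : ℝ :=
  p ^ (Finset.univ.filter (fun i => ω i = true)).card *
    (1 - p) ^ (Finset.univ.filter (fun i => ω i = false)).card

lemma fk_eq (k : ℕ) (p : ℝ) (n : ℕ) :
    fk k p n = ∑ ω : Fin n → Bool, if firstRun k n ω then wt p ω else 0 := by
  rw [fk, ← Finset.sum_filter]; rfl

/-- survival function: total weight of strings with no completed run. -/
noncomputable def sv (k : ℕ) (p : ℝ) (m : ℕ) : ℝ :=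
  ∑ ω : Fin m → Bool, if (∀ j, ¬ hasRunEnd k m ω j) then wt p ω else 0

lemma card_filter_eq_sum {n : ℕ} (P : Fin n → Prop) [DecidablePred P] :
    (univ.filter P).card = ∑ i : Fin n, if P i then 1 else 0 :=
  Finset.card_filter P univ

lemma wt_eq_prod (p : ℝ) {n : ℕ} (ω : Fin n → Bool) :
    wt p ω = p ^ (∑ i : Fin n, if ω i = true then 1 else 0) *
      (1 - p) ^ (∑ i : Fin n, if ω i = false then 1 else 0) := by
  rw [wt, card_filter_eq_sum, card_filter_eq_sum]

lemma wt_snoc (p : ℝ) {n : ℕ} (ω : Fin n → Bool) (b : Bool) :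
    wt p (Fin.snoc ω b) = wt p ω * (if b then p else 1 - p) := by
  rw [wt_eq_prod, wt_eq_prod]
  have h1 : ∀ c : Bool, (∑ i : Fin (n+1), if (Fin.snoc ω b : Fin (n+1) → Bool) i = c then 1 else 0)
      = (∑ i : Fin n, if ω i = c then 1 else 0) + (if b = c then 1 else 0) := by
    intro c
    rw [Fin.sum_univ_castSucc]
    simp only [Fin.snoc_castSucc, Fin.snoc_last]
  rw [h1, h1]
  cases b <;> simp [pow_succ] <;> ring

def snocE (n : ℕ) : ((Fin n → Bool) × Bool) ≃ (Fin (n+1) → Bool) where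
  toFun x := Fin.snoc x.1 x.2
  invFun ω := (Fin.init ω, ω (Fin.last n))
  left_inv := by
    rintro ⟨ω, b⟩
    simp only [Fin.init_snoc, Fin.snoc_last]
  right_inv := fun ω => Fin.snoc_init_self ω

/-- sum over strings of length n+1 as a sum over (prefix, last). -/
lemma sum_snoc {n : ℕ} (F : (Fin (n+1) → Bool) → ℝ) :
    ∑ ω : Fin (n+1) → Bool, F ω
      = ∑ ω : Fin n → Bool, (F (Fin.snoc ω true) + F (Fin.snoc ω false)) := by
  classical
  rw [← Equiv.sum_comp (snocE n) F, Fintype.sum_prod_type]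
  refine Finset.sum_congr rfl fun ω _ => ?_
  rw [Fintype.sum_bool]
  rfl

lemma hasRunEnd_snoc {k m : ℕ} (ω : Fin m → Bool) (b : Bool) {j : ℕ} (hjm : j ≤ m) :
    hasRunEnd k (m+1) (Fin.snoc ω b) j ↔ hasRunEnd k m ω j := by
  constructor
  · rintro ⟨h1, _, h3⟩
    refine ⟨h1, hjm, fun i hi1 hi2 => ?_⟩
    have := h3 i.castSucc (by simpa using hi1) (by simpa using hi2)
    simpa using this
  · rintro ⟨h1, _, h3⟩
    refine ⟨h1, by omega, fun i hi1 hi2 => ?_⟩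
    have him : (i : ℕ) < m := lt_of_lt_of_le hi2 hjm
    have : i = Fin.castSucc ⟨(i : ℕ), him⟩ := by
      apply Fin.ext; simp
    rw [this, Fin.snoc_castSucc]
    exact h3 _ hi1 hi2

lemma sv_step (k : ℕ) (p : ℝ) (m : ℕ) : sv k p m = sv k p (m+1) + fk k p (m+1) := by
  classical
  rw [sv, sv, fk_eq, ← Finset.sum_add_distrib]
  have key : ∀ ω' : Fin (m+1) → Bool,
      ((if (∀ j, ¬ hasRunEnd k (m+1) ω' j) then wt p ω' else 0)
        + if firstRun k (m+1) ω' then wt p ω' else 0)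
      = if (∀ j ≤ m, ¬ hasRunEnd k (m+1) ω' j) then wt p ω' else 0 := by
    intro ω'
    by_cases h : hasRunEnd k (m+1) ω' (m+1)
    · rw [if_neg (fun hs => hs (m+1) h)]
      have : firstRun k (m+1) ω' ↔ (∀ j ≤ m, ¬ hasRunEnd k (m+1) ω' j) := by
        constructor
        · rintro ⟨_, h2⟩ j hj
          exact h2 j (by omega)
        · intro hq
          exact ⟨h, fun j hj => hq j (by omega)⟩
      rw [zero_add]
      by_cases h2 : firstRun k (m+1) ω'
      · rw [if_pos h2, if_pos (this.mp h2)]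
      · rw [if_neg h2, if_neg (fun hq => h2 (this.mpr hq))]
    · rw [if_neg (show ¬ firstRun k (m+1) ω' from fun hf => h hf.1), add_zero]
      have : (∀ j, ¬ hasRunEnd k (m+1) ω' j) ↔ (∀ j ≤ m, ¬ hasRunEnd k (m+1) ω' j) := by
        constructor
        · intro hs j _; exact hs j
        · intro hq j
          rcases lt_trichotomy j (m+1) with hj | hj | hj
          · exact hq j (by omega)
          · rw [hj]; exact h
          · intro hr; exact absurd hr.2.1 (by omega)
      by_cases h2 : ∀ j, ¬ hasRunEnd k (m+1) ω' j
      · rw [if_pos h2, if_pos (this.mp h2)]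
      · rw [if_neg h2, if_neg (fun hq => h2 (this.mpr hq))]
  rw [Finset.sum_congr rfl (fun ω' _ => key ω')]
  rw [sum_snoc (fun ω' => if (∀ j ≤ m, ¬ hasRunEnd k (m+1) ω' j) then wt p ω' else 0)]
  refine Finset.sum_congr rfl fun ω _ => ?_
  have hsn : ∀ b : Bool, (∀ j ≤ m, ¬ hasRunEnd k (m+1) (Fin.snoc ω b : Fin (m+1) → Bool) j)
      ↔ (∀ j, ¬ hasRunEnd k m ω j) := by
    intro b
    constructor
    · intro hq j hr
      have hjm : j ≤ m := hr.2.1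
      exact hq j hjm ((hasRunEnd_snoc ω b hjm).mpr hr)
    · intro hs j hjm hr
      exact hs j ((hasRunEnd_snoc ω b hjm).mp hr)
  rw [wt_snoc, wt_snoc]
  by_cases hs : ∀ j, ¬ hasRunEnd k m ω j
  · rw [if_pos hs, if_pos ((hsn true).mpr hs), if_pos ((hsn false).mpr hs)]
    simp; ring
  · rw [if_neg hs, if_neg (fun h => hs ((hsn true).mp h)), if_neg (fun h => hs ((hsn false).mp h))]
    simp

def appendE (m l : ℕ) : ((Fin m → Bool) × (Fin l → Bool)) ≃ (Fin (m+l) → Bool) where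
  toFun x := Fin.append x.1 x.2
  invFun ω := (fun i => ω (Fin.castAdd l i), fun i => ω (Fin.natAdd m i))
  left_inv := by
    rintro ⟨u, v⟩
    refine Prod.ext (funext fun i => ?_) (funext fun i => ?_) <;>
      simp [Fin.append_left, Fin.append_right]
  right_inv := by
    intro ω
    funext i
    refine Fin.addCases (fun j => ?_) (fun j => ?_) i <;>
      simp [Fin.append_left, Fin.append_right]

lemma sum_append {m l : ℕ} (F : (Fin (m+l) → Bool) → ℝ) :
    ∑ ω : Fin (m+l) → Bool, F ω
      = ∑ ω : Fin m → Bool, ∑ τ : Fin l → Bool, F (Fin.append ω τ) := by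
  rw [← Equiv.sum_comp (appendE m l) F, Fintype.sum_prod_type]
  rfl

lemma append_val_lt {m l : ℕ} (u : Fin m → Bool) (v : Fin l → Bool) (i : Fin (m+l))
    (h : (i : ℕ) < m) : Fin.append u v i = u ⟨(i : ℕ), h⟩ := by
  have h2 : Fin.castAdd l ⟨(i : ℕ), h⟩ = i := by apply Fin.ext; simp
  conv_lhs => rw [← h2]
  exact Fin.append_left u v _

lemma append_val_ge {m l : ℕ} (u : Fin m → Bool) (v : Fin l → Bool) (i : Fin (m+l))
    (h : m ≤ (i : ℕ)) : Fin.append u v i = v ⟨(i : ℕ) - m, by omega⟩ := by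
  have h2 : Fin.natAdd m ⟨(i : ℕ) - m, by omega⟩ = i := by apply Fin.ext; simp; omega
  conv_lhs => rw [← h2]
  exact Fin.append_right u v _

lemma wt_append (p : ℝ) {m l : ℕ} (u : Fin m → Bool) (v : Fin l → Bool) :
    wt p (Fin.append u v) = wt p u * wt p v := by
  rw [wt_eq_prod, wt_eq_prod, wt_eq_prod]
  have h1 : ∀ c : Bool, (∑ i : Fin (m+l), if Fin.append u v i = c then 1 else 0)
      = (∑ i : Fin m, if u i = c then 1 else 0) + (∑ i : Fin l, if v i = c then 1 else 0) := by
    intro c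
    rw [Fin.sum_univ_add]
    simp only [Fin.append_left, Fin.append_right]
  rw [h1, h1, pow_add, pow_add]
  ring

/-- the forced tail: one failure followed by `k` successes. -/
def tl (k : ℕ) : Fin (k+1) → Bool := fun i => decide (0 < (i : ℕ))

lemma wt_tl (p : ℝ) (k : ℕ) : wt p (tl k) = (1 - p) * p ^ k := by
  rw [wt_eq_prod]
  have h1 : (∑ i : Fin (k+1), if tl k i = true then 1 else 0) = k := by
    rw [Fin.sum_univ_succ]
    simp [tl]
  have h2 : (∑ i : Fin (k+1), if tl k i = false then 1 else 0) = 1 := by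
    rw [Fin.sum_univ_succ]
    simp [tl]
  rw [h1, h2, pow_one]
  ring

lemma firstRun_append_iff {k : ℕ} (hk : 1 ≤ k) (m : ℕ) (ω : Fin m → Bool)
    (τ : Fin (k+1) → Bool) :
    firstRun k (m+(k+1)) (Fin.append ω τ) ↔ ((∀ j, ¬ hasRunEnd k m ω j) ∧ τ = tl k) := by
  set n := m + (k+1) with hn
  constructor
  · rintro ⟨hrun, hfirst⟩
    have hτpos : ∀ t : Fin (k+1), 1 ≤ (t : ℕ) → τ t = true := by
      intro t ht
      have hlt : m + (t : ℕ) < n := by omega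
      have := hrun.2.2 ⟨m + (t : ℕ), hlt⟩ (by simp only [Fin.val_mk]; omega)
        (by simp only [Fin.val_mk]; omega)
      rw [append_val_ge ω τ _ (by simp)] at this
      convert this using 2
      apply Fin.ext
      simp
    have hτ0 : τ ⟨0, by omega⟩ = false := by
      by_contra h0
      have h0' : τ ⟨0, by omega⟩ = true := by
        cases h : τ ⟨0, by omega⟩
        · exact absurd h h0
        · rfl
      apply hfirst (m + k) (by omega)
      refine ⟨by omega, by omega, fun i hi1 hi2 => ?_⟩
      have him : m ≤ (i : ℕ) := by omega
      rw [append_val_ge ω τ i him]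
      rcases Nat.eq_or_lt_of_le him with he | hl
      · convert h0' using 2
        apply Fin.ext
        simp
        omega
      · exact hτpos _ (by simp; omega)
    constructor
    · intro j hr
      obtain ⟨hr1, hr2, hr3⟩ := hr
      apply hfirst j (by omega)
      refine ⟨hr1, by omega, fun i hi1 hi2 => ?_⟩
      have him : (i : ℕ) < m := by omega
      rw [append_val_lt ω τ i him]
      exact hr3 ⟨(i : ℕ), him⟩ hi1 hi2
    · funext t
      rcases Nat.eq_zero_or_pos (t : ℕ) with ht | ht
      · have : t = ⟨0, by omega⟩ := Fin.ext ht
        rw [this, hτ0]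
        simp [tl]
      · rw [hτpos t ht]
        simp [tl]
        rw [Fin.lt_def, Fin.val_zero]; omega
  · rintro ⟨hs, rfl⟩
    constructor
    · refine ⟨by omega, le_refl _, fun i hi1 hi2 => ?_⟩
      have him : m ≤ (i : ℕ) := by omega
      rw [append_val_ge ω (tl k) i him]
      simp [tl]
      omega
    · intro j hj hr
      rcases le_or_gt j m with hjm | hjm
      · apply hs j
        refine ⟨hr.1, hjm, fun i hi1 hi2 => ?_⟩
        have him : (i : ℕ) < m := by omega
        have := hr.2.2 ⟨(i : ℕ), by omega⟩ hi1 hi2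
        rw [append_val_lt ω (tl k) _ him] at this
        exact this
      · have hjk : k ≤ j := hr.1
        have hmlt : m < n := by omega
        have := hr.2.2 ⟨m, hmlt⟩ (by simp; omega) (by simp; omega)
        rw [append_val_ge ω (tl k) _ (by simp)] at this
        simp [tl] at this
  
lemma fk_shift {k : ℕ} (hk : 1 ≤ k) (p : ℝ) (m : ℕ) :
    fk k p (m + (k+1)) = (1 - p) * p ^ k * sv k p m := by
  rw [fk_eq, sum_append (fun ω' => if firstRun k (m+(k+1)) ω' then wt p ω' else 0), sv]
  rw [Finset.mul_sum]
  refine Finset.sum_congr rfl fun ω _ => ?_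
  have : ∀ τ : Fin (k+1) → Bool,
      (if firstRun k (m+(k+1)) (Fin.append ω τ) then wt p (Fin.append ω τ) else 0)
      = if τ = tl k then (if (∀ j, ¬ hasRunEnd k m ω j) then wt p ω * wt p (tl k) else 0)
        else 0 := by
    intro τ
    by_cases hτ : τ = tl k
    · subst hτ
      rw [if_pos rfl, wt_append]
      by_cases hs : ∀ j, ¬ hasRunEnd k m ω j
      · rw [if_pos ((firstRun_append_iff hk m ω _).mpr ⟨hs, rfl⟩), if_pos hs]
      · rw [if_neg (fun h => hs ((firstRun_append_iff hk m ω _).mp h).1), if_neg hs]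
    · rw [if_neg hτ, if_neg (fun h => hτ ((firstRun_append_iff hk m ω τ).mp h).2)]
  rw [Finset.sum_congr rfl (fun τ _ => this τ), Finset.sum_ite_eq' univ (tl k) _]
  rw [if_pos (mem_univ _)]
  by_cases hs : ∀ j, ¬ hasRunEnd k m ω j
  · rw [if_pos hs, if_pos hs, wt_tl]
    ring
  · rw [if_neg hs, if_neg hs, mul_zero]

lemma wt_nonneg {p : ℝ} (hp0 : 0 ≤ p) (hp1 : p ≤ 1) {n : ℕ} (ω : Fin n → Bool) :
    0 ≤ wt p ω :=
  mul_nonneg (pow_nonneg hp0 _) (pow_nonneg (by linarith) _)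

lemma fk_nonneg {p : ℝ} (hp0 : 0 ≤ p) (hp1 : p ≤ 1) (k n : ℕ) : 0 ≤ fk k p n := by
  rw [fk_eq]
  refine Finset.sum_nonneg fun ω _ => ?_
  split
  · exact wt_nonneg hp0 hp1 ω
  · exact le_refl 0

lemma sv_nonneg {p : ℝ} (hp0 : 0 ≤ p) (hp1 : p ≤ 1) (k m : ℕ) : 0 ≤ sv k p m := by
  refine Finset.sum_nonneg fun ω _ => ?_
  split
  · exact wt_nonneg hp0 hp1 ω
  · exact le_refl 0

lemma total_wt (p : ℝ) : ∀ m : ℕ, ∑ ω : Fin m → Bool, wt p ω = 1 := by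
  intro m
  induction m with
  | zero =>
    rw [Fintype.sum_eq_single (fun _ => true) (fun ω hω => absurd (Subsingleton.elim ω _) hω)]
    simp [wt]
  | succ n ih =>
    rw [sum_snoc (fun ω => wt p ω)]
    have : ∀ ω : Fin n → Bool, wt p (Fin.snoc ω true : Fin (n+1) → Bool)
        + wt p (Fin.snoc ω false : Fin (n+1) → Bool) = wt p ω := by
      intro ω
      rw [wt_snoc, wt_snoc]
      simp
      ring
    rw [Finset.sum_congr rfl (fun ω _ => this ω), ih]

lemma sv_small {k m : ℕ} (hm : m < k) (p : ℝ) : sv k p m = 1 := by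
  rw [sv]
  have : ∀ ω : Fin m → Bool, (∀ j, ¬ hasRunEnd k m ω j) := by
    intro ω j hr
    have h1 := hr.1
    have h2 := hr.2.1
    omega
  rw [Finset.sum_congr rfl (fun ω _ => if_pos (this ω)), total_wt]

lemma fk_small {k n : ℕ} (hn : n < k) (p : ℝ) : fk k p n = 0 := by
  rw [fk_eq]
  refine Finset.sum_eq_zero fun ω _ => ?_
  rw [if_neg]
  rintro ⟨⟨h1, -, -⟩, -⟩
  omega

lemma fk_at_k (k : ℕ) (p : ℝ) : fk k p k = p ^ k := by
  rw [fk_eq]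
  have : ∀ ω : Fin k → Bool, (if firstRun k k ω then wt p ω else 0)
      = if ω = (fun _ => true) then wt p ω else 0 := by
    intro ω
    have hiff : firstRun k k ω ↔ ω = (fun _ => true) := by
      constructor
      · rintro ⟨⟨-, -, h3⟩, -⟩
        funext i
        exact h3 i (by omega) i.2
      · rintro rfl
        exact ⟨⟨by omega, le_refl _, fun i _ _ => rfl⟩, fun m hm hr => by
          have := hr.1; omega⟩
    by_cases h : firstRun k k ω
    · rw [if_pos h, if_pos (hiff.mp h)]
    · rw [if_neg h, if_neg (fun he => h (hiff.mpr he))]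
  rw [Finset.sum_congr rfl (fun ω _ => this ω), Finset.sum_ite_eq' univ _ (wt p),
    if_pos (mem_univ _)]
  rw [wt]
  simp

lemma sv_at_k {k : ℕ} (hk : 1 ≤ k) (p : ℝ) : sv k p k = 1 - p ^ k := by
  have h := sv_step k p (k - 1)
  rw [show k - 1 + 1 = k by omega] at h
  rw [sv_small (by omega) p] at h
  rw [fk_at_k] at h
  linarith

lemma sv_rec {k : ℕ} (hk : 1 ≤ k) (p : ℝ) (m : ℕ) :
    sv k p (m + k) = sv k p (m + k + 1) + (1 - p) * p ^ k * sv k p m := by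
  have h := sv_step k p (m + k)
  have h2 : m + k + 1 = m + (k + 1) := by omega
  rw [h2] at h ⊢
  rw [fk_shift hk p m] at h
  exact h

lemma sv_succ_le {k : ℕ} {p : ℝ} (hp0 : 0 ≤ p) (hp1 : p ≤ 1) (m : ℕ) :
    sv k p (m + 1) ≤ sv k p m := by
  have h := sv_step k p m
  have := fk_nonneg hp0 hp1 k (m + 1)
  linarith

lemma sv_anti {k : ℕ} {p : ℝ} (hp0 : 0 ≤ p) (hp1 : p ≤ 1) :
    Antitone (sv k p) :=
  antitone_nat_of_succ_le (sv_succ_le hp0 hp1)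

lemma sv_le_one {k : ℕ} {p : ℝ} (hk : 1 ≤ k) (hp0 : 0 ≤ p) (hp1 : p ≤ 1) (m : ℕ) :
    sv k p m ≤ 1 := by
  have := sv_anti (k := k) hp0 hp1 (Nat.zero_le m)
  rw [sv_small hk p] at this
  exact this

lemma sv_decay {k : ℕ} {p : ℝ} (hk : 1 ≤ k) (hp0 : 0 ≤ p) (hp1 : p ≤ 1) (m : ℕ) :
    sv k p (m + (k + 1)) ≤ (1 - (1 - p) * p ^ k) * sv k p m := by
  have h := sv_rec hk p m
  have h2 : sv k p (m + k) ≤ sv k p m := sv_anti hp0 hp1 (by omega)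
  have h3 : m + (k + 1) = m + k + 1 := by omega
  rw [h3]
  nlinarith [sv_nonneg hp0 hp1 k m]

lemma sv_decay_pow {k : ℕ} {p : ℝ} (hk : 1 ≤ k) (hp0 : 0 ≤ p) (hp1 : p ≤ 1) :
    ∀ t i : ℕ, sv k p (i + t * (k + 1)) ≤ (1 - (1 - p) * p ^ k) ^ t := by
  have hr0 : 0 ≤ 1 - (1 - p) * p ^ k := by
    have h1 : (1 - p) * p ^ k ≤ 1 * 1 := by
      apply mul_le_mul (by linarith) (pow_le_one₀ hp0 hp1) (pow_nonneg hp0 _) (by norm_num)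
    linarith
  intro t
  induction t with
  | zero => intro i; simpa using sv_le_one hk hp0 hp1 i
  | succ t ih =>
    intro i
    have h1 : i + (t + 1) * (k + 1) = (i + t * (k + 1)) + (k + 1) := by ring
    rw [h1, pow_succ']
    calc sv k p ((i + t * (k + 1)) + (k + 1))
        ≤ (1 - (1 - p) * p ^ k) * sv k p (i + t * (k + 1)) := sv_decay hk hp0 hp1 _
      _ ≤ (1 - (1 - p) * p ^ k) * (1 - (1 - p) * p ^ k) ^ t :=
          mul_le_mul_of_nonneg_left (ih i) hr0

section Summability

variable {k : ℕ} {p : ℝ}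

lemma r_nonneg (hp0 : 0 < p) (hp1 : p < 1) : 0 ≤ 1 - (1 - p) * p ^ k := by
  have h1 : (1 - p) * p ^ k ≤ 1 * 1 :=
    mul_le_mul (by linarith) (pow_le_one₀ hp0.le hp1.le) (pow_nonneg hp0.le _) (by norm_num)
  linarith

lemma r_lt_one (hp0 : 0 < p) (hp1 : p < 1) : 1 - (1 - p) * p ^ k < 1 := by
  have h1 : 0 < (1 - p) * p ^ k := mul_pos (by linarith) (pow_pos hp0 _)
  linarith

lemma summable_d (hp0 : 0 < p) (hp1 : p < 1) :
    Summable (fun t : ℕ => (((t : ℝ) + 1) ^ 2 + ((t : ℝ) + 1) + 1) * (1 - (1 - p) * p ^ k) ^ t) := by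
  set r : ℝ := 1 - (1 - p) * p ^ k with hr
  have hrn : ‖r‖ < 1 := by
    rw [Real.norm_eq_abs, abs_of_nonneg (r_nonneg hp0 hp1)]
    exact r_lt_one hp0 hp1
  have h2 : Summable (fun t : ℕ => (t : ℝ) ^ 2 * r ^ t) :=
    summable_pow_mul_geometric_of_norm_lt_one 2 hrn
  have h1 : Summable (fun t : ℕ => (t : ℝ) * r ^ t) := by
    have h := summable_pow_mul_geometric_of_norm_lt_one 1 hrn (R := ℝ)
    exact h.congr fun t => by rw [pow_one]
  have h0 : Summable (fun t : ℕ => r ^ t) := summable_geometric_of_norm_lt_one hrn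
  have := ((h2.add (h1.mul_left 3)).add (h0.mul_left 3))
  apply this.congr
  intro t
  show (t : ℝ) ^ 2 * _ + 3 * ((t : ℝ) * _) + 3 * _ = _
  ring

lemma summable_main (hk : 1 ≤ k) (hp0 : 0 < p) (hp1 : p < 1) :
    Summable (fun m : ℕ => ((m : ℝ) ^ 2 + (m : ℝ) + 1) * sv k p m) := by
  set r : ℝ := 1 - (1 - p) * p ^ k with hr
  have hr0 : 0 ≤ r := r_nonneg hp0 hp1
  have hd := summable_d (k := k) hp0 hp1
  set f : ℕ → ℝ := fun m => ((m : ℝ) ^ 2 + (m : ℝ) + 1) * sv k p m with hf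
  have hfnn : ∀ m, 0 ≤ f m := by
    intro m
    apply mul_nonneg _ (sv_nonneg hp0.le hp1.le k m)
    positivity
  have hdnn : ∀ t : ℕ, 0 ≤ (((t : ℝ) + 1) ^ 2 + ((t : ℝ) + 1) + 1) * r ^ t := by
    intro t
    apply mul_nonneg _ (pow_nonneg hr0 _)
    positivity
  apply summable_of_sum_range_le (c := ((k : ℝ) + 1) ^ 3 * ∑' t : ℕ,
    (((t : ℝ) + 1) ^ 2 + ((t : ℝ) + 1) + 1) * r ^ t) hfnn
  intro N
  have hsub : range N ⊆ (range N ×ˢ range (k + 1)).image (fun q : ℕ × ℕ => q.2 + q.1 * (k + 1)) := by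
    intro m hm
    rw [mem_range] at hm
    refine Finset.mem_image.mpr ⟨(m / (k + 1), m % (k + 1)), ?_, Nat.mod_add_div' m (k + 1)⟩
    rw [Finset.mem_product, mem_range, mem_range]
    exact ⟨lt_of_le_of_lt (Nat.div_le_self m (k + 1)) hm, Nat.mod_lt m (by omega)⟩
  have hinj : ∀ q1 ∈ range N ×ˢ range (k + 1), ∀ q2 ∈ range N ×ˢ range (k + 1),
      q1.2 + q1.1 * (k + 1) = q2.2 + q2.1 * (k + 1) → q1 = q2 := by
    rintro ⟨t1, i1⟩ h1 ⟨t2, i2⟩ h2 heq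
    rw [Finset.mem_product, mem_range, mem_range] at h1 h2
    have hdiv : ∀ i t : ℕ, i < k + 1 → (i + t * (k + 1)) / (k + 1) = t := by
      intro i t hi
      rw [Nat.add_mul_div_right _ _ (by omega : 0 < k + 1), Nat.div_eq_of_lt hi, zero_add]
    have ht : t1 = t2 := by
      have e1 := hdiv i1 t1 h1.2
      have e2 := hdiv i2 t2 h2.2
      rw [← e1, ← e2, heq]
    have hi : i1 = i2 := by
      subst ht
      exact Nat.add_right_cancel heq
    simp [ht, hi]
  calc ∑ m ∈ range N, f m
      ≤ ∑ m ∈ (range N ×ˢ range (k + 1)).image (fun q : ℕ × ℕ => q.2 + q.1 * (k + 1)), f m :=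
        Finset.sum_le_sum_of_subset_of_nonneg hsub (fun m _ _ => hfnn m)
    _ = ∑ q ∈ range N ×ˢ range (k + 1), f (q.2 + q.1 * (k + 1)) :=
        (Finset.sum_image hinj)
    _ ≤ ∑ q ∈ range N ×ˢ range (k + 1),
          ((k : ℝ) + 1) ^ 2 * ((((q.1 : ℝ) + 1) ^ 2 + ((q.1 : ℝ) + 1) + 1) * r ^ q.1) := by
        refine Finset.sum_le_sum fun q hq => ?_
        rw [Finset.mem_product, mem_range, mem_range] at hq
        obtain ⟨t, i⟩ := q
        obtain ⟨ht, hi⟩ := hq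
        have hsv : sv k p (i + t * (k + 1)) ≤ r ^ t := sv_decay_pow hk hp0.le hp1.le t i
        have hsvn : 0 ≤ sv k p (i + t * (k + 1)) := sv_nonneg hp0.le hp1.le k _
        have hmle : ((i + t * (k + 1) : ℕ) : ℝ) ≤ ((k : ℝ) + 1) * ((t : ℝ) + 1) := by
          push_cast
          have : (i : ℝ) ≤ k := by
            have : i ≤ k := by omega
            exact_mod_cast this
          nlinarith [Nat.cast_nonneg (α := ℝ) t, Nat.cast_nonneg (α := ℝ) k]
        have hc : ((i + t * (k + 1) : ℕ) : ℝ) ^ 2 + ((i + t * (k + 1) : ℕ) : ℝ) + 1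
            ≤ ((k : ℝ) + 1) ^ 2 * (((t : ℝ) + 1) ^ 2 + ((t : ℝ) + 1) + 1) := by
          have hM0 : (0 : ℝ) ≤ ((i + t * (k + 1) : ℕ) : ℝ) := Nat.cast_nonneg _
          have hK : (1 : ℝ) ≤ (k : ℝ) := by exact_mod_cast hk
          have hT : (1 : ℝ) ≤ (t : ℝ) + 1 := by
            have := Nat.cast_nonneg (α := ℝ) t; linarith
          nlinarith [mul_le_mul hmle hmle hM0 (by nlinarith), hmle]
        calc f (i + t * (k + 1))
            ≤ (((i + t * (k + 1) : ℕ) : ℝ) ^ 2 + ((i + t * (k + 1) : ℕ) : ℝ) + 1) * r ^ t := by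
              apply mul_le_mul_of_nonneg_left hsv
              positivity
          _ ≤ ((k : ℝ) + 1) ^ 2 * ((((t : ℝ) + 1) ^ 2 + ((t : ℝ) + 1) + 1) * r ^ t) := by
              rw [← mul_assoc]
              exact mul_le_mul_of_nonneg_right hc (pow_nonneg hr0 _)
    _ = ∑ t ∈ range N, ((k : ℝ) + 1) ^ 3 * ((((t : ℝ) + 1) ^ 2 + ((t : ℝ) + 1) + 1) * r ^ t) := by
        rw [Finset.sum_product]
        refine Finset.sum_congr rfl fun t _ => ?_
        simp only
        rw [Finset.sum_const, card_range, nsmul_eq_mul]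
        push_cast
        ring
    _ = ((k : ℝ) + 1) ^ 3 * ∑ t ∈ range N, ((((t : ℝ) + 1) ^ 2 + ((t : ℝ) + 1) + 1) * r ^ t) := by
        rw [Finset.mul_sum]
    _ ≤ ((k : ℝ) + 1) ^ 3 * ∑' t : ℕ, ((((t : ℝ) + 1) ^ 2 + ((t : ℝ) + 1) + 1) * r ^ t) := by
        refine mul_le_mul_of_nonneg_left ?_ (by positivity)
        exact Summable.sum_le_tsum (range N) (fun t _ => hdnn t) hd

lemma summable_sv (hk : 1 ≤ k) (hp0 : 0 < p) (hp1 : p < 1) : Summable (sv k p) := by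
  apply (summable_main hk hp0 hp1).of_nonneg_of_le (fun m => sv_nonneg hp0.le hp1.le k m)
  intro m
  have h1 : (1 : ℝ) ≤ (m : ℝ) ^ 2 + (m : ℝ) + 1 := by
    nlinarith [sq_nonneg (m : ℝ), Nat.cast_nonneg (α := ℝ) m]
  nlinarith [sv_nonneg hp0.le hp1.le k m]

lemma summable_msv (hk : 1 ≤ k) (hp0 : 0 < p) (hp1 : p < 1) :
    Summable (fun m : ℕ => (m : ℝ) * sv k p m) := by
  apply (summable_main hk hp0 hp1).of_nonneg_of_le
    (fun m => mul_nonneg (Nat.cast_nonneg m) (sv_nonneg hp0.le hp1.le k m))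
  intro m
  have h1 : (m : ℝ) ≤ (m : ℝ) ^ 2 + (m : ℝ) + 1 := by
    nlinarith [sq_nonneg (m : ℝ)]
  exact mul_le_mul_of_nonneg_right h1 (sv_nonneg hp0.le hp1.le k m)

end Summability

section Series

variable {k : ℕ} {p : ℝ}

lemma tendsto_sv_zero (hk : 1 ≤ k) (hp0 : 0 < p) (hp1 : p < 1) :
    Filter.Tendsto (sv k p) Filter.atTop (nhds 0) :=
  (summable_sv hk hp0 hp1).tendsto_atTop_zero

lemma tendsto_sv_shift (hk : 1 ≤ k) (hp0 : 0 < p) (hp1 : p < 1) (a : ℕ) :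
    Filter.Tendsto (fun N => sv k p (a + N)) Filter.atTop (nhds 0) := by
  have h := (tendsto_sv_zero hk hp0 hp1).comp (Filter.tendsto_add_atTop_nat a)
  refine h.congr fun N => ?_
  simp [Function.comp, Nat.add_comm]

lemma tendsto_msv_shift (hk : 1 ≤ k) (hp0 : 0 < p) (hp1 : p < 1) (a : ℕ) :
    Filter.Tendsto (fun N : ℕ => ((a : ℝ) + (N : ℝ)) * sv k p (a + N)) Filter.atTop (nhds 0) := by
  have h := ((summable_msv hk hp0 hp1).tendsto_atTop_zero).comp
    (Filter.tendsto_add_atTop_nat a)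
  refine h.congr fun N => ?_
  show ((N + a : ℕ) : ℝ) * sv k p (N + a) = _
  rw [Nat.add_comm N a]
  push_cast
  ring

lemma partial_one (hk : 1 ≤ k) (p : ℝ) (N : ℕ) :
    (1 - p) * p ^ k * ∑ i ∈ range N, sv k p i = sv k p k - sv k p (k + N) := by
  induction N with
  | zero => simp
  | succ N ih =>
    rw [Finset.sum_range_succ, mul_add, ih]
    have h := sv_rec hk p N
    have h2 : k + (N + 1) = N + k + 1 := by omega
    have h3 : k + N = N + k := by omega
    rw [h2, h3]
    linarith

lemma key1 (hk : 1 ≤ k) (hp0 : 0 < p) (hp1 : p < 1) :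
    (1 - p) * p ^ k * (∑' m : ℕ, sv k p m) = 1 - p ^ k := by
  have hs := summable_sv hk hp0 hp1
  have h1 : Filter.Tendsto (fun N => (1 - p) * p ^ k * ∑ i ∈ range N, sv k p i)
      Filter.atTop (nhds ((1 - p) * p ^ k * ∑' m : ℕ, sv k p m)) :=
    (hs.hasSum.tendsto_sum_nat).const_mul _
  have h2 : Filter.Tendsto (fun N => sv k p k - sv k p (k + N))
      Filter.atTop (nhds (sv k p k - 0)) :=
    (tendsto_const_nhds).sub (tendsto_sv_shift hk hp0 hp1 k)
  have h3 := h2.congr (fun N => (partial_one hk p N).symm)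
  have := tendsto_nhds_unique h1 h3
  rw [this, sub_zero, sv_at_k hk]

lemma partial_two (hk : 1 ≤ k) (p : ℝ) (N : ℕ) :
    ∑ i ∈ range N, ((i : ℝ) + k) * ((1 - p) * p ^ k * sv k p i)
      = k * sv k p k - ((k : ℝ) + N) * sv k p (k + N) + ∑ i ∈ range N, sv k p (k + 1 + i) := by
  induction N with
  | zero => simp
  | succ N ih =>
    rw [Finset.sum_range_succ, ih, Finset.sum_range_succ]
    have h := sv_rec hk p N
    have h2 : k + (N + 1) = N + k + 1 := by omega
    have h3 : k + N = N + k := by omega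
    have h4 : k + 1 + N = N + k + 1 := by omega
    rw [h2, h3, h4]
    push_cast
    nlinarith [h]

lemma key2 (hk : 1 ≤ k) (hp0 : 0 < p) (hp1 : p < 1) :
    (1 - p) * p ^ k * (∑' m : ℕ, (m : ℝ) * sv k p m)
      + (1 - p) * p ^ k * k * (∑' m : ℕ, sv k p m)
      = ((k : ℝ) - 1) * (1 - p ^ k) + (∑' m : ℕ, sv k p m) - k := by
  have hsv := summable_sv hk hp0 hp1
  have hmsv := summable_msv hk hp0 hp1
  set c : ℝ := (1 - p) * p ^ k with hc
  -- summand on the left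
  have hsum : Summable (fun i : ℕ => ((i : ℝ) + k) * (c * sv k p i)) := by
    have := (hmsv.mul_left c).add ((hsv.mul_left (c * k)))
    refine this.congr fun i => ?_
    show c * ((i : ℝ) * sv k p i) + c * k * sv k p i = _
    ring
  have h1 : Filter.Tendsto (fun N => ∑ i ∈ range N, ((i : ℝ) + k) * (c * sv k p i))
      Filter.atTop (nhds (∑' i : ℕ, ((i : ℝ) + k) * (c * sv k p i))) :=
    hsum.hasSum.tendsto_sum_nat
  -- the shifted sv series
  have hshift : Summable (fun i : ℕ => sv k p (i + (k + 1))) :=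
    ((summable_nat_add_iff (k + 1)).mpr hsv)
  have h2 : Filter.Tendsto (fun N => ∑ i ∈ range N, sv k p (k + 1 + i))
      Filter.atTop (nhds (∑' i : ℕ, sv k p (i + (k + 1)))) := by
    have := hshift.hasSum.tendsto_sum_nat
    refine this.congr fun N => Finset.sum_congr rfl fun i _ => ?_
    rw [Nat.add_comm]
  have h3 : Filter.Tendsto
      (fun N => (k : ℝ) * sv k p k - ((k : ℝ) + N) * sv k p (k + N)
        + ∑ i ∈ range N, sv k p (k + 1 + i))
      Filter.atTop
      (nhds ((k : ℝ) * sv k p k - 0 + ∑' i : ℕ, sv k p (i + (k + 1)))) :=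
    ((tendsto_const_nhds).sub (tendsto_msv_shift hk hp0 hp1 k)).add h2
  have h4 := h3.congr (fun N => (partial_two hk p N).symm)
  have heq := tendsto_nhds_unique h1 h4
  -- rewrite both sides
  have hL : (∑' i : ℕ, ((i : ℝ) + k) * (c * sv k p i))
      = c * (∑' m : ℕ, (m : ℝ) * sv k p m) + c * k * (∑' m : ℕ, sv k p m) := by
    rw [← tsum_mul_left (a := c), ← tsum_mul_left (a := c * k),
      ← Summable.tsum_add ((hmsv.mul_left c)) ((hsv.mul_left (c * k)))]
    refine tsum_congr fun i => ?_
    ring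
  have hR : (∑' i : ℕ, sv k p (i + (k + 1)))
      = (∑' m : ℕ, sv k p m) - ∑ i ∈ range (k + 1), sv k p i := by
    have := Summable.sum_add_tsum_nat_add (f := sv k p) (k + 1) hsv
    linarith
  have hsum_init : ∑ i ∈ range (k + 1), sv k p i = (k : ℝ) + (1 - p ^ k) := by
    rw [Finset.sum_range_succ, sv_at_k hk]
    have : ∀ i ∈ range k, sv k p i = 1 := fun i hi => sv_small (mem_range.mp hi) p
    rw [Finset.sum_congr rfl this, Finset.sum_const, card_range, nsmul_eq_mul, mul_one]
  rw [hL, hR, hsum_init, sv_at_k hk] at heq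
  rw [heq]
  ring

end Series

section Final

variable {k : ℕ} {p : ℝ}

lemma partial_tail (k : ℕ) (p : ℝ) (j N : ℕ) :
    ∑ i ∈ range N, fk k p (i + (j + 1)) = sv k p j - sv k p (j + N) := by
  induction N with
  | zero => simp
  | succ N ih =>
    rw [Finset.sum_range_succ, ih]
    have h := sv_step k p (j + N)
    rw [show N + (j + 1) = j + N + 1 by omega, show j + (N + 1) = j + N + 1 by omega]
    linarith

lemma hasSum_tail (hk : 1 ≤ k) (hp0 : 0 < p) (hp1 : p < 1) (j : ℕ) :
    HasSum (fun i : ℕ => fk k p (i + (j + 1))) (sv k p j) := by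
  rw [hasSum_iff_tendsto_nat_of_nonneg (fun i => fk_nonneg hp0.le hp1.le k _) _]
  have h2 : Filter.Tendsto (fun N => sv k p j - sv k p (j + N)) Filter.atTop
      (nhds (sv k p j - 0)) :=
    tendsto_const_nhds.sub (tendsto_sv_shift hk hp0 hp1 j)
  rw [sub_zero] at h2
  exact h2.congr fun N => (partial_tail k p j N).symm

lemma summable_fk (hk : 1 ≤ k) (hp0 : 0 < p) (hp1 : p < 1) : Summable (fk k p) := by
  rw [← summable_nat_add_iff (k + 1)]
  have he : (fun n => fk k p (n + (k + 1))) = fun n => (1 - p) * p ^ k * sv k p n :=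
    funext fun n => fk_shift hk p n
  rw [he]
  exact (summable_sv hk hp0 hp1).mul_left _

lemma cast_descFactorial (n : ℕ) :
    ((n.descFactorial 2 : ℕ) : ℝ) = (n : ℝ) * ((n : ℝ) - 1) := by
  cases n with
  | zero => simp
  | succ m =>
    have h : (m + 1).descFactorial 2 = m * (m + 1) := by
      simp [Nat.descFactorial]
    rw [h]
    push_cast
    ring

lemma sum_range_cast (n : ℕ) : ∑ j ∈ range n, (j : ℝ) = (n : ℝ) * ((n : ℝ) - 1) / 2 := by
  induction n with
  | zero => simp
  | succ m ih =>
    rw [Finset.sum_range_succ, ih]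
    push_cast
    ring

lemma hsum2 (hk : 1 ≤ k) (hp0 : 0 < p) (hp1 : p < 1) :
    Summable (fun n : ℕ => (n : ℝ) * ((n : ℝ) - 1) * fk k p n) := by
  rw [← summable_nat_add_iff (k + 1)]
  have hc0 : 0 ≤ (1 - p) * p ^ k := mul_nonneg (by linarith) (pow_nonneg hp0.le _)
  refine Summable.of_nonneg_of_le (fun m => ?_) (fun m => ?_)
    ((summable_main hk hp0 hp1).mul_left (2 * ((k : ℝ) + 1) ^ 2 * ((1 - p) * p ^ k)))
  · have h1 : (0 : ℝ) ≤ ((m + (k + 1) : ℕ) : ℝ) := Nat.cast_nonneg _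
    have h2 : (0 : ℝ) ≤ ((m + (k + 1) : ℕ) : ℝ) - 1 := by
      push_cast
      have : (0:ℝ) ≤ (m : ℝ) := Nat.cast_nonneg m
      have : (1:ℝ) ≤ (k : ℝ) := by exact_mod_cast hk
      linarith
    exact mul_nonneg (mul_nonneg h1 h2) (fk_nonneg hp0.le hp1.le k _)
  · rw [fk_shift hk p m]
    have hsv0 : 0 ≤ sv k p m := sv_nonneg hp0.le hp1.le k m
    have hM0 : (0:ℝ) ≤ (m : ℝ) := Nat.cast_nonneg m
    have hK1 : (1:ℝ) ≤ (k : ℝ) := by exact_mod_cast hk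
    push_cast
    have hfac : ((m : ℝ) + (k + 1)) * ((m : ℝ) + (k + 1) - 1)
        ≤ 2 * ((k : ℝ) + 1) ^ 2 * ((m : ℝ) ^ 2 + m + 1) := by
      nlinarith [sq_nonneg ((m : ℝ) - k), sq_nonneg ((m : ℝ) + k),
        mul_nonneg hM0 (by linarith : (0:ℝ) ≤ (k : ℝ))]
    calc ((m : ℝ) + (k + 1)) * ((m : ℝ) + (k + 1) - 1) * ((1 - p) * p ^ k * sv k p m)
        ≤ 2 * ((k : ℝ) + 1) ^ 2 * ((m : ℝ) ^ 2 + m + 1) * ((1 - p) * p ^ k * sv k p m) :=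
          mul_le_mul_of_nonneg_right hfac (mul_nonneg hc0 hsv0)
      _ = 2 * ((k : ℝ) + 1) ^ 2 * ((1 - p) * p ^ k) * (((m : ℝ) ^ 2 + m + 1) * sv k p m) := by
          ring

lemma mu2_eq (hk : 1 ≤ k) (hp0 : 0 < p) (hp1 : p < 1) :
    ∑' n : ℕ, (n : ℝ) * ((n : ℝ) - 1) * fk k p n = 2 * ∑' m : ℕ, (m : ℝ) * sv k p m := by
  classical
  have hfk := summable_fk hk hp0 hp1
  set F : ℕ → ℕ → ℝ := fun n j => if j < n then 2 * (j : ℝ) * fk k p n else 0 with hF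
  have hFnn : 0 ≤ Function.uncurry F := by
    rintro ⟨n, j⟩
    show (0:ℝ) ≤ F n j
    simp only [hF]
    split
    · exact mul_nonneg (mul_nonneg (by norm_num) (Nat.cast_nonneg j))
        (fk_nonneg hp0.le hp1.le k n)
    · exact le_refl 0
  have hrow : ∀ n, Summable (F n) := fun n =>
    summable_of_ne_finset_zero (s := range n) (fun j hj => if_neg (fun h => hj (mem_range.mpr h)))
  have hrow_sum : ∀ n, ∑' j : ℕ, F n j = (n : ℝ) * ((n : ℝ) - 1) * fk k p n := by
    intro n
    rw [tsum_eq_sum (s := range n) (fun j hj => if_neg (fun h => hj (mem_range.mpr h)))]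
    rw [Finset.sum_congr rfl (fun j hj => if_pos (mem_range.mp hj))]
    have he : ∑ j ∈ range n, 2 * (j : ℝ) * fk k p n
        = (∑ j ∈ range n, (j : ℝ)) * (2 * fk k p n) := by
      rw [Finset.sum_mul]
      exact Finset.sum_congr rfl fun j _ => by ring
    rw [he, sum_range_cast]
    ring
  have huncurry : Summable (Function.uncurry F) := by
    rw [summable_prod_of_nonneg hFnn]
    exact ⟨fun n => hrow n, ((hsum2 hk hp0 hp1).congr fun n => (hrow_sum n).symm)⟩
  have hcol : ∀ j, Summable (fun n => F n j) := by
    intro j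
    refine Summable.of_nonneg_of_le (fun n => ?_) (fun n => ?_) (hfk.mul_left (2 * (j : ℝ)))
    · exact hFnn (n, j)
    · simp only [hF]
      split
      · exact le_refl _
      · exact mul_nonneg (mul_nonneg (by norm_num) (Nat.cast_nonneg j))
          (fk_nonneg hp0.le hp1.le k n)
  have hswap := Summable.tsum_comm' huncurry hrow hcol
  calc ∑' n : ℕ, (n : ℝ) * ((n : ℝ) - 1) * fk k p n
      = ∑' n : ℕ, ∑' j : ℕ, F n j := tsum_congr fun n => (hrow_sum n).symm
    _ = ∑' j : ℕ, ∑' n : ℕ, F n j := hswap.symm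
    _ = ∑' j : ℕ, 2 * (j : ℝ) * sv k p j := by
        refine tsum_congr fun j => ?_
        have h1 : ∀ n, F n j = 2 * (j : ℝ) * (if j < n then fk k p n else 0) := by
          intro n
          simp only [hF]
          split
          · rfl
          · rw [mul_zero]
        rw [tsum_congr h1, tsum_mul_left]
        have hG : Summable (fun n => if j < n then fk k p n else 0) := by
          refine Summable.of_nonneg_of_le (fun n => ?_) (fun n => ?_) hfk
          · split
            · exact fk_nonneg hp0.le hp1.le k n
            · exact le_refl 0
          · split
            · exact le_refl _
            · exact fk_nonneg hp0.le hp1.le k n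
        have hsplit := Summable.sum_add_tsum_nat_add (f := fun n => if j < n then fk k p n else 0)
          (j + 1) hG
        have hz : ∑ i ∈ range (j + 1), (if j < i then fk k p i else 0) = 0 :=
          Finset.sum_eq_zero fun i hi => if_neg (by rw [mem_range] at hi; omega)
        rw [hz, zero_add] at hsplit
        have hsh : ∀ i : ℕ, (if j < i + (j + 1) then fk k p (i + (j + 1)) else 0)
            = fk k p (i + (j + 1)) := fun i => if_pos (by omega)
        rw [← hsplit, tsum_congr hsh, (hasSum_tail hk hp0 hp1 j).tsum_eq]
    _ = 2 * ∑' m : ℕ, (m : ℝ) * sv k p m := by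
        rw [← tsum_mul_left]
        exact tsum_congr fun j => by ring

end Final


/-- The second factorial moment:
`μ_(2) = 2/(q^2 p^{2k}) - 2(1 + (k+1)q)/(q^2 p^k) + 2/q`. -/
theorem second_factorial_moment (k : ℕ) (hk : 1 ≤ k) (p q : ℝ) (hp0 : 0 < p) (hp1 : p < 1)
    (hq : q = 1 - p) :
    ∑' n : ℕ, (n.descFactorial 2 : ℝ) * fk k p n
      = 2 / (q ^ 2 * p ^ (2 * k)) - 2 * (1 + (k + 1) * q) / (q ^ 2 * p ^ k) + 2 / q := by
  subst hq
  have h1 := key1 hk hp0 hp1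
  have h2 := key2 hk hp0 hp1
  have hstep0 : ∑' n : ℕ, (n.descFactorial 2 : ℝ) * fk k p n
      = ∑' n : ℕ, (n : ℝ) * ((n : ℝ) - 1) * fk k p n := by
    refine tsum_congr fun n => ?_
    rw [cast_descFactorial]
  rw [hstep0, mu2_eq hk hp0 hp1]
  have hpk : p ^ k ≠ 0 := pow_ne_zero _ hp0.ne'
  have hqne : 1 - p ≠ 0 := by intro h; linarith
  rw [show 2 * k = k * 2 from mul_comm 2 k, pow_mul]
  have hM : (1 - p) ^ 2 * (p ^ k) ^ 2 * (∑' m : ℕ, (m : ℝ) * sv k p m)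
      = 1 - (1 + ((k : ℝ) + 1) * (1 - p)) * p ^ k + (1 - p) * (p ^ k) ^ 2 := by
    linear_combination ((1 - p) * p ^ k) * h2 + (1 - (1 - p) * p ^ k * (k : ℝ)) * h1
  have hMv : (∑' m : ℕ, (m : ℝ) * sv k p m)
      = (1 - (1 + ((k : ℝ) + 1) * (1 - p)) * p ^ k + (1 - p) * (p ^ k) ^ 2)
        / ((1 - p) ^ 2 * (p ^ k) ^ 2) := by
    rw [eq_div_iff (mul_ne_zero (pow_ne_zero 2 hqne) (pow_ne_zero 2 hpk))]
    linear_combination hM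
  rw [hMv]
  field_simp
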